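/- Let f = x₁·(x₁x₂ + x₃² + x₄²) ∈ ℝ[x₁,x₂,x₃,x₄]. Then the rank of f over ℝ is exactly 7, and the Waring rank of f over ℝ is exactly 7. -/

import Mathlib

/-- A tensor of format `n × n × n` is symmetric if its entries are unchanged under
every permutation of the three indices. -/
def IsSymTensor {K : Type*} [Field K] {n : ℕ} (T : Fin n → Fin n → Fin n → K) : Prop :=
  ∀ (σ : Equiv.Perm (Fin 3)) (v : Fin 3 → Fin n),
    T (v (σ 0)) (v (σ 1)) (v (σ 2)) = T (v 0) (v 1) (v 2)

/-- The rank of an `n × n × n` tensor over `K`: the least `r` admitting a decomposition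
into `r` rank-one terms. -/
noncomputable def tensorRank {K : Type*} [Field K] {n : ℕ}
    (T : Fin n → Fin n → Fin n → K) : ℕ :=
  sInf {r : ℕ | ∃ u v w : Fin r → Fin n → K,
    ∀ i j k, T i j k = ∑ s, u s i * v s j * w s k}

/-- The symmetric rank of an `n × n × n` tensor over `K`. -/
noncomputable def symTensorRank {K : Type*} [Field K] {n : ℕ}
    (T : Fin n → Fin n → Fin n → K) : ℕ :=
  sInf {r : ℕ | ∃ (lam : Fin r → K) (u : Fin r → Fin n → K),
    ∀ i j k, T i j k = ∑ s, lam s * (u s i * u s j * u s k)}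

open MvPolynomial in
/-- The Waring rank over `ℝ` of a polynomial in four variables: the least `r` such that
`f` is a linear combination of `r` cubes of linear forms. -/
noncomputable def waringRank (f : MvPolynomial (Fin 4) ℝ) : ℕ :=
  sInf {r : ℕ | ∃ (lam : Fin r → ℝ) (l : Fin r → Fin 4 → ℝ),
    f = ∑ s, C (lam s) * (∑ i, C (l s i) * X i) ^ 3}

open MvPolynomial in
/-- The rank over `ℝ` of a cubic `f`: the tensor rank of the unique symmetric
`4 × 4 × 4` tensor `T` with `f = ∑ T i j k · xᵢ xⱼ xₖ`. -/
noncomputable def cubicRank (f : MvPolynomial (Fin 4) ℝ) : ℕ :=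
  sInf {r : ℕ | ∃ T : Fin 4 → Fin 4 → Fin 4 → ℝ, IsSymTensor T ∧
    f = (∑ i, ∑ j, ∑ k, C (T i j k) * X i * X j * X k) ∧ tensorRank T ≤ r}


section AuxRank
open Finset MvPolynomial

def trips : List (Fin 4 × Fin 4 × Fin 4) :=
  [(0,0,1),(0,1,0),(1,0,0),(0,2,2),(2,0,2),(2,2,0),(0,3,3),(3,0,3),(3,3,0)]

noncomputable def Tcan : Fin 4 → Fin 4 → Fin 4 → ℝ := fun i j k =>
  if (i, j, k) ∈ trips then 1/3 else 0

example : Tcan 0 0 1 = 1/3 := by rw [Tcan, if_pos (by decide)]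
example : Tcan 2 0 2 = 1/3 := by rw [Tcan, if_pos (by decide)]
example : Tcan 1 2 0 = 0 := by rw [Tcan, if_neg (by decide)]

lemma trips_perm : ∀ a b c : Fin 3, a ≠ b → a ≠ c → b ≠ c →
    ∀ v : Fin 3 → Fin 4, ((v a, v b, v c) ∈ trips ↔ (v 0, v 1, v 2) ∈ trips) := by decide

lemma Tcan_sym : ∀ (σ : Equiv.Perm (Fin 3)) (v : Fin 3 → Fin 4),
    Tcan (v (σ 0)) (v (σ 1)) (v (σ 2)) = Tcan (v 0) (v 1) (v 2) := by
  intro σ v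
  unfold Tcan
  rw [if_congr (trips_perm (σ 0) (σ 1) (σ 2)
    (σ.injective.ne (by decide)) (σ.injective.ne (by decide)) (σ.injective.ne (by decide)) v) rfl rfl]

lemma tv000 : Tcan 0 0 0 = 0 := by rw [Tcan, if_neg (by decide)]
lemma tv001 : Tcan 0 0 1 = 1/3 := by rw [Tcan, if_pos (by decide)]
lemma tv002 : Tcan 0 0 2 = 0 := by rw [Tcan, if_neg (by decide)]
lemma tv003 : Tcan 0 0 3 = 0 := by rw [Tcan, if_neg (by decide)]
lemma tv010 : Tcan 0 1 0 = 1/3 := by rw [Tcan, if_pos (by decide)]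
lemma tv011 : Tcan 0 1 1 = 0 := by rw [Tcan, if_neg (by decide)]
lemma tv012 : Tcan 0 1 2 = 0 := by rw [Tcan, if_neg (by decide)]
lemma tv013 : Tcan 0 1 3 = 0 := by rw [Tcan, if_neg (by decide)]
lemma tv020 : Tcan 0 2 0 = 0 := by rw [Tcan, if_neg (by decide)]
lemma tv021 : Tcan 0 2 1 = 0 := by rw [Tcan, if_neg (by decide)]
lemma tv022 : Tcan 0 2 2 = 1/3 := by rw [Tcan, if_pos (by decide)]
lemma tv023 : Tcan 0 2 3 = 0 := by rw [Tcan, if_neg (by decide)]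
lemma tv030 : Tcan 0 3 0 = 0 := by rw [Tcan, if_neg (by decide)]
lemma tv031 : Tcan 0 3 1 = 0 := by rw [Tcan, if_neg (by decide)]
lemma tv032 : Tcan 0 3 2 = 0 := by rw [Tcan, if_neg (by decide)]
lemma tv033 : Tcan 0 3 3 = 1/3 := by rw [Tcan, if_pos (by decide)]
lemma tv100 : Tcan 1 0 0 = 1/3 := by rw [Tcan, if_pos (by decide)]
lemma tv101 : Tcan 1 0 1 = 0 := by rw [Tcan, if_neg (by decide)]
lemma tv102 : Tcan 1 0 2 = 0 := by rw [Tcan, if_neg (by decide)]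
lemma tv103 : Tcan 1 0 3 = 0 := by rw [Tcan, if_neg (by decide)]
lemma tv110 : Tcan 1 1 0 = 0 := by rw [Tcan, if_neg (by decide)]
lemma tv111 : Tcan 1 1 1 = 0 := by rw [Tcan, if_neg (by decide)]
lemma tv112 : Tcan 1 1 2 = 0 := by rw [Tcan, if_neg (by decide)]
lemma tv113 : Tcan 1 1 3 = 0 := by rw [Tcan, if_neg (by decide)]
lemma tv120 : Tcan 1 2 0 = 0 := by rw [Tcan, if_neg (by decide)]
lemma tv121 : Tcan 1 2 1 = 0 := by rw [Tcan, if_neg (by decide)]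
lemma tv122 : Tcan 1 2 2 = 0 := by rw [Tcan, if_neg (by decide)]
lemma tv123 : Tcan 1 2 3 = 0 := by rw [Tcan, if_neg (by decide)]
lemma tv130 : Tcan 1 3 0 = 0 := by rw [Tcan, if_neg (by decide)]
lemma tv131 : Tcan 1 3 1 = 0 := by rw [Tcan, if_neg (by decide)]
lemma tv132 : Tcan 1 3 2 = 0 := by rw [Tcan, if_neg (by decide)]
lemma tv133 : Tcan 1 3 3 = 0 := by rw [Tcan, if_neg (by decide)]
lemma tv200 : Tcan 2 0 0 = 0 := by rw [Tcan, if_neg (by decide)]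
lemma tv201 : Tcan 2 0 1 = 0 := by rw [Tcan, if_neg (by decide)]
lemma tv202 : Tcan 2 0 2 = 1/3 := by rw [Tcan, if_pos (by decide)]
lemma tv203 : Tcan 2 0 3 = 0 := by rw [Tcan, if_neg (by decide)]
lemma tv210 : Tcan 2 1 0 = 0 := by rw [Tcan, if_neg (by decide)]
lemma tv211 : Tcan 2 1 1 = 0 := by rw [Tcan, if_neg (by decide)]
lemma tv212 : Tcan 2 1 2 = 0 := by rw [Tcan, if_neg (by decide)]
lemma tv213 : Tcan 2 1 3 = 0 := by rw [Tcan, if_neg (by decide)]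
lemma tv220 : Tcan 2 2 0 = 1/3 := by rw [Tcan, if_pos (by decide)]
lemma tv221 : Tcan 2 2 1 = 0 := by rw [Tcan, if_neg (by decide)]
lemma tv222 : Tcan 2 2 2 = 0 := by rw [Tcan, if_neg (by decide)]
lemma tv223 : Tcan 2 2 3 = 0 := by rw [Tcan, if_neg (by decide)]
lemma tv230 : Tcan 2 3 0 = 0 := by rw [Tcan, if_neg (by decide)]
lemma tv231 : Tcan 2 3 1 = 0 := by rw [Tcan, if_neg (by decide)]
lemma tv232 : Tcan 2 3 2 = 0 := by rw [Tcan, if_neg (by decide)]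
lemma tv233 : Tcan 2 3 3 = 0 := by rw [Tcan, if_neg (by decide)]
lemma tv300 : Tcan 3 0 0 = 0 := by rw [Tcan, if_neg (by decide)]
lemma tv301 : Tcan 3 0 1 = 0 := by rw [Tcan, if_neg (by decide)]
lemma tv302 : Tcan 3 0 2 = 0 := by rw [Tcan, if_neg (by decide)]
lemma tv303 : Tcan 3 0 3 = 1/3 := by rw [Tcan, if_pos (by decide)]
lemma tv310 : Tcan 3 1 0 = 0 := by rw [Tcan, if_neg (by decide)]
lemma tv311 : Tcan 3 1 1 = 0 := by rw [Tcan, if_neg (by decide)]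
lemma tv312 : Tcan 3 1 2 = 0 := by rw [Tcan, if_neg (by decide)]
lemma tv313 : Tcan 3 1 3 = 0 := by rw [Tcan, if_neg (by decide)]
lemma tv320 : Tcan 3 2 0 = 0 := by rw [Tcan, if_neg (by decide)]
lemma tv321 : Tcan 3 2 1 = 0 := by rw [Tcan, if_neg (by decide)]
lemma tv322 : Tcan 3 2 2 = 0 := by rw [Tcan, if_neg (by decide)]
lemma tv323 : Tcan 3 2 3 = 0 := by rw [Tcan, if_neg (by decide)]
lemma tv330 : Tcan 3 3 0 = 1/3 := by rw [Tcan, if_pos (by decide)]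
lemma tv331 : Tcan 3 3 1 = 0 := by rw [Tcan, if_neg (by decide)]
lemma tv332 : Tcan 3 3 2 = 0 := by rw [Tcan, if_neg (by decide)]
lemma tv333 : Tcan 3 3 3 = 0 := by rw [Tcan, if_neg (by decide)]


noncomputable def lam7 : Fin 7 → ℝ
  | 0 => 1/6 | 1 => 1/6 | 2 => 1/6 | 3 => 1/6 | 4 => 1/162 | 5 => -1/162 | 6 => -1/81

noncomputable def l7 : Fin 7 → Fin 4 → ℝ
  | 0 => ![1,0,1,0] | 1 => ![1,0,-1,0] | 2 => ![1,0,0,1] | 3 => ![1,0,0,-1]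
  | 4 => ![1,3,0,0] | 5 => ![5,-3,0,0] | 6 => ![-2,3,0,0]

example : lam7 4 = 1/162 := rfl
example : l7 5 2 = 0 := rfl

lemma waring_id :
    (X 0 * (X 0 * X 1 + X 2 ^ 2 + X 3 ^ 2) : MvPolynomial (Fin 4) ℝ) =
      ∑ s : Fin 7, C (lam7 s) * (∑ i, C (l7 s i) * X i) ^ 3 := by
  apply MvPolynomial.funext
  intro x
  simp only [map_sum, eval_mul, eval_add, eval_pow, eval_C, eval_X, Fin.sum_univ_seven,
    Fin.sum_univ_four]
  simp only [lam7, l7, Matrix.cons_val]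
  norm_num [lam7, l7]
  ring

set_option maxHeartbeats 4000000 in
lemma Tuniq (T' : Fin 4 → Fin 4 → Fin 4 → ℝ) (hsym : IsSymTensor T')
    (H : ∀ y : Fin 4 → ℝ, (∑ i, ∑ j, ∑ k, T' i j k * y i * y j * y k) =
      y 0 ^ 2 * y 1 + y 0 * y 2 ^ 2 + y 0 * y 3 ^ 2) : T' = Tcan := by
  have h01 : ∀ a b c, T' b a c = T' a b c := by
    intro a b c
    have h := hsym (Equiv.swap 0 1) ![a,b,c]
    rw [show ((Equiv.swap 0 1 : Equiv.Perm (Fin 3)) 0) = 1 by decide,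
      show ((Equiv.swap 0 1 : Equiv.Perm (Fin 3)) 1) = 0 by decide,
      show ((Equiv.swap 0 1 : Equiv.Perm (Fin 3)) 2) = 2 by decide] at h
    simpa using h
  have h12 : ∀ a b c, T' a c b = T' a b c := by
    intro a b c
    have h := hsym (Equiv.swap 1 2) ![a,b,c]
    rw [show ((Equiv.swap 1 2 : Equiv.Perm (Fin 3)) 0) = 0 by decide,
      show ((Equiv.swap 1 2 : Equiv.Perm (Fin 3)) 1) = 2 by decide,
      show ((Equiv.swap 1 2 : Equiv.Perm (Fin 3)) 2) = 1 by decide] at h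
    simpa using h
  have s010 : T' 0 1 0 = T' 0 0 1 := (h12 0 0 1)
  have s020 : T' 0 2 0 = T' 0 0 2 := (h12 0 0 2)
  have s021 : T' 0 2 1 = T' 0 1 2 := (h12 0 1 2)
  have s030 : T' 0 3 0 = T' 0 0 3 := (h12 0 0 3)
  have s031 : T' 0 3 1 = T' 0 1 3 := (h12 0 1 3)
  have s032 : T' 0 3 2 = T' 0 2 3 := (h12 0 2 3)
  have s100 : T' 1 0 0 = T' 0 0 1 := (h01 0 1 0).trans ((h12 0 0 1))
  have s101 : T' 1 0 1 = T' 0 1 1 := (h01 0 1 1)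
  have s102 : T' 1 0 2 = T' 0 1 2 := (h01 0 1 2)
  have s103 : T' 1 0 3 = T' 0 1 3 := (h01 0 1 3)
  have s110 : T' 1 1 0 = T' 0 1 1 := (h12 1 0 1).trans ((h01 0 1 1))
  have s120 : T' 1 2 0 = T' 0 1 2 := (h12 1 0 2).trans ((h01 0 1 2))
  have s121 : T' 1 2 1 = T' 1 1 2 := (h12 1 1 2)
  have s130 : T' 1 3 0 = T' 0 1 3 := (h12 1 0 3).trans ((h01 0 1 3))
  have s131 : T' 1 3 1 = T' 1 1 3 := (h12 1 1 3)
  have s132 : T' 1 3 2 = T' 1 2 3 := (h12 1 2 3)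
  have s200 : T' 2 0 0 = T' 0 0 2 := (h01 0 2 0).trans ((h12 0 0 2))
  have s201 : T' 2 0 1 = T' 0 1 2 := (h01 0 2 1).trans ((h12 0 1 2))
  have s202 : T' 2 0 2 = T' 0 2 2 := (h01 0 2 2)
  have s203 : T' 2 0 3 = T' 0 2 3 := (h01 0 2 3)
  have s210 : T' 2 1 0 = T' 0 1 2 := (h01 1 2 0).trans ((h12 1 0 2).trans ((h01 0 1 2)))
  have s211 : T' 2 1 1 = T' 1 1 2 := (h01 1 2 1).trans ((h12 1 1 2))
  have s212 : T' 2 1 2 = T' 1 2 2 := (h01 1 2 2)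
  have s213 : T' 2 1 3 = T' 1 2 3 := (h01 1 2 3)
  have s220 : T' 2 2 0 = T' 0 2 2 := (h12 2 0 2).trans ((h01 0 2 2))
  have s221 : T' 2 2 1 = T' 1 2 2 := (h12 2 1 2).trans ((h01 1 2 2))
  have s230 : T' 2 3 0 = T' 0 2 3 := (h12 2 0 3).trans ((h01 0 2 3))
  have s231 : T' 2 3 1 = T' 1 2 3 := (h12 2 1 3).trans ((h01 1 2 3))
  have s232 : T' 2 3 2 = T' 2 2 3 := (h12 2 2 3)
  have s300 : T' 3 0 0 = T' 0 0 3 := (h01 0 3 0).trans ((h12 0 0 3))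
  have s301 : T' 3 0 1 = T' 0 1 3 := (h01 0 3 1).trans ((h12 0 1 3))
  have s302 : T' 3 0 2 = T' 0 2 3 := (h01 0 3 2).trans ((h12 0 2 3))
  have s303 : T' 3 0 3 = T' 0 3 3 := (h01 0 3 3)
  have s310 : T' 3 1 0 = T' 0 1 3 := (h01 1 3 0).trans ((h12 1 0 3).trans ((h01 0 1 3)))
  have s311 : T' 3 1 1 = T' 1 1 3 := (h01 1 3 1).trans ((h12 1 1 3))
  have s312 : T' 3 1 2 = T' 1 2 3 := (h01 1 3 2).trans ((h12 1 2 3))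
  have s313 : T' 3 1 3 = T' 1 3 3 := (h01 1 3 3)
  have s320 : T' 3 2 0 = T' 0 2 3 := (h01 2 3 0).trans ((h12 2 0 3).trans ((h01 0 2 3)))
  have s321 : T' 3 2 1 = T' 1 2 3 := (h01 2 3 1).trans ((h12 2 1 3).trans ((h01 1 2 3)))
  have s322 : T' 3 2 2 = T' 2 2 3 := (h01 2 3 2).trans ((h12 2 2 3))
  have s323 : T' 3 2 3 = T' 2 3 3 := (h01 2 3 3)
  have s330 : T' 3 3 0 = T' 0 3 3 := (h12 3 0 3).trans ((h01 0 3 3))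
  have s331 : T' 3 3 1 = T' 1 3 3 := (h12 3 1 3).trans ((h01 1 3 3))
  have s332 : T' 3 3 2 = T' 2 3 3 := (h12 3 2 3).trans ((h01 2 3 3))
  have q0 := H ![1,0,0,0]
  simp only [Fin.sum_univ_four, Matrix.cons_val] at q0
  norm_num at q0
  have q1 := H ![0,1,0,0]
  simp only [Fin.sum_univ_four, Matrix.cons_val] at q1
  norm_num at q1
  have q2 := H ![0,0,1,0]
  simp only [Fin.sum_univ_four, Matrix.cons_val] at q2
  norm_num at q2
  have q3 := H ![0,0,0,1]
  simp only [Fin.sum_univ_four, Matrix.cons_val] at q3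
  norm_num at q3
  have p01a := H ![1,1,0,0]
  simp only [Fin.sum_univ_four, Matrix.cons_val] at p01a
  norm_num at p01a
  rw [s010, s100, s101, s110] at p01a
  have p01b := H ![1,-1,0,0]
  simp only [Fin.sum_univ_four, Matrix.cons_val] at p01b
  norm_num at p01b
  rw [s010, s100, s101, s110] at p01b
  have p02a := H ![1,0,1,0]
  simp only [Fin.sum_univ_four, Matrix.cons_val] at p02a
  norm_num at p02a
  rw [s020, s200, s202, s220] at p02a
  have p02b := H ![1,0,-1,0]
  simp only [Fin.sum_univ_four, Matrix.cons_val] at p02b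
  norm_num at p02b
  rw [s020, s200, s202, s220] at p02b
  have p03a := H ![1,0,0,1]
  simp only [Fin.sum_univ_four, Matrix.cons_val] at p03a
  norm_num at p03a
  rw [s030, s300, s303, s330] at p03a
  have p03b := H ![1,0,0,-1]
  simp only [Fin.sum_univ_four, Matrix.cons_val] at p03b
  norm_num at p03b
  rw [s030, s300, s303, s330] at p03b
  have p12a := H ![0,1,1,0]
  simp only [Fin.sum_univ_four, Matrix.cons_val] at p12a
  norm_num at p12a
  rw [s121, s211, s212, s221] at p12a
  have p12b := H ![0,1,-1,0]
  simp only [Fin.sum_univ_four, Matrix.cons_val] at p12b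
  norm_num at p12b
  rw [s121, s211, s212, s221] at p12b
  have p13a := H ![0,1,0,1]
  simp only [Fin.sum_univ_four, Matrix.cons_val] at p13a
  norm_num at p13a
  rw [s131, s311, s313, s331] at p13a
  have p13b := H ![0,1,0,-1]
  simp only [Fin.sum_univ_four, Matrix.cons_val] at p13b
  norm_num at p13b
  rw [s131, s311, s313, s331] at p13b
  have p23a := H ![0,0,1,1]
  simp only [Fin.sum_univ_four, Matrix.cons_val] at p23a
  norm_num at p23a
  rw [s232, s322, s323, s332] at p23a
  have p23b := H ![0,0,1,-1]
  simp only [Fin.sum_univ_four, Matrix.cons_val] at p23b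
  norm_num at p23b
  rw [s232, s322, s323, s332] at p23b
  have r012 := H ![1,1,1,0]
  simp only [Fin.sum_univ_four, Matrix.cons_val] at r012
  norm_num at r012
  rw [s010, s020, s021, s100, s101, s102, s110, s120, s121, s200, s201, s202, s210, s211, s212, s220, s221] at r012
  have r013 := H ![1,1,0,1]
  simp only [Fin.sum_univ_four, Matrix.cons_val] at r013
  norm_num at r013
  rw [s010, s030, s031, s100, s101, s103, s110, s130, s131, s300, s301, s303, s310, s311, s313, s330, s331] at r013
  have r023 := H ![1,0,1,1]
  simp only [Fin.sum_univ_four, Matrix.cons_val] at r023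
  norm_num at r023
  rw [s020, s030, s032, s200, s202, s203, s220, s230, s232, s300, s302, s303, s320, s322, s323, s330, s332] at r023
  have r123 := H ![0,1,1,1]
  simp only [Fin.sum_univ_four, Matrix.cons_val] at r123
  norm_num at r123
  rw [s121, s131, s132, s211, s212, s213, s221, s231, s232, s311, s312, s313, s321, s322, s323, s331, s332] at r123
  funext i j k
  fin_cases i <;> fin_cases j <;> fin_cases k
  · show T' 0 0 0 = Tcan 0 0 0; rw [Tcan, if_neg (by decide)]; linarith [q0, q1, q2, q3, p01a, p01b, p02a, p02b, p03a, p03b, p12a, p12b, p13a, p13b, p23a, p23b, r012, r013, r023, r123]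
  · show T' 0 0 1 = Tcan 0 0 1; rw [Tcan, if_pos (by decide)]; linarith [q0, q1, q2, q3, p01a, p01b, p02a, p02b, p03a, p03b, p12a, p12b, p13a, p13b, p23a, p23b, r012, r013, r023, r123]
  · show T' 0 0 2 = Tcan 0 0 2; rw [Tcan, if_neg (by decide)]; linarith [q0, q1, q2, q3, p01a, p01b, p02a, p02b, p03a, p03b, p12a, p12b, p13a, p13b, p23a, p23b, r012, r013, r023, r123]
  · show T' 0 0 3 = Tcan 0 0 3; rw [Tcan, if_neg (by decide)]; linarith [q0, q1, q2, q3, p01a, p01b, p02a, p02b, p03a, p03b, p12a, p12b, p13a, p13b, p23a, p23b, r012, r013, r023, r123]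
  · show T' 0 1 0 = Tcan 0 1 0; rw [Tcan, if_pos (by decide)]; rw [s010]; linarith [q0, q1, q2, q3, p01a, p01b, p02a, p02b, p03a, p03b, p12a, p12b, p13a, p13b, p23a, p23b, r012, r013, r023, r123]
  · show T' 0 1 1 = Tcan 0 1 1; rw [Tcan, if_neg (by decide)]; linarith [q0, q1, q2, q3, p01a, p01b, p02a, p02b, p03a, p03b, p12a, p12b, p13a, p13b, p23a, p23b, r012, r013, r023, r123]
  · show T' 0 1 2 = Tcan 0 1 2; rw [Tcan, if_neg (by decide)]; linarith [q0, q1, q2, q3, p01a, p01b, p02a, p02b, p03a, p03b, p12a, p12b, p13a, p13b, p23a, p23b, r012, r013, r023, r123]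
  · show T' 0 1 3 = Tcan 0 1 3; rw [Tcan, if_neg (by decide)]; linarith [q0, q1, q2, q3, p01a, p01b, p02a, p02b, p03a, p03b, p12a, p12b, p13a, p13b, p23a, p23b, r012, r013, r023, r123]
  · show T' 0 2 0 = Tcan 0 2 0; rw [Tcan, if_neg (by decide)]; rw [s020]; linarith [q0, q1, q2, q3, p01a, p01b, p02a, p02b, p03a, p03b, p12a, p12b, p13a, p13b, p23a, p23b, r012, r013, r023, r123]
  · show T' 0 2 1 = Tcan 0 2 1; rw [Tcan, if_neg (by decide)]; rw [s021]; linarith [q0, q1, q2, q3, p01a, p01b, p02a, p02b, p03a, p03b, p12a, p12b, p13a, p13b, p23a, p23b, r012, r013, r023, r123]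
  · show T' 0 2 2 = Tcan 0 2 2; rw [Tcan, if_pos (by decide)]; linarith [q0, q1, q2, q3, p01a, p01b, p02a, p02b, p03a, p03b, p12a, p12b, p13a, p13b, p23a, p23b, r012, r013, r023, r123]
  · show T' 0 2 3 = Tcan 0 2 3; rw [Tcan, if_neg (by decide)]; linarith [q0, q1, q2, q3, p01a, p01b, p02a, p02b, p03a, p03b, p12a, p12b, p13a, p13b, p23a, p23b, r012, r013, r023, r123]
  · show T' 0 3 0 = Tcan 0 3 0; rw [Tcan, if_neg (by decide)]; rw [s030]; linarith [q0, q1, q2, q3, p01a, p01b, p02a, p02b, p03a, p03b, p12a, p12b, p13a, p13b, p23a, p23b, r012, r013, r023, r123]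
  · show T' 0 3 1 = Tcan 0 3 1; rw [Tcan, if_neg (by decide)]; rw [s031]; linarith [q0, q1, q2, q3, p01a, p01b, p02a, p02b, p03a, p03b, p12a, p12b, p13a, p13b, p23a, p23b, r012, r013, r023, r123]
  · show T' 0 3 2 = Tcan 0 3 2; rw [Tcan, if_neg (by decide)]; rw [s032]; linarith [q0, q1, q2, q3, p01a, p01b, p02a, p02b, p03a, p03b, p12a, p12b, p13a, p13b, p23a, p23b, r012, r013, r023, r123]
  · show T' 0 3 3 = Tcan 0 3 3; rw [Tcan, if_pos (by decide)]; linarith [q0, q1, q2, q3, p01a, p01b, p02a, p02b, p03a, p03b, p12a, p12b, p13a, p13b, p23a, p23b, r012, r013, r023, r123]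
  · show T' 1 0 0 = Tcan 1 0 0; rw [Tcan, if_pos (by decide)]; rw [s100]; linarith [q0, q1, q2, q3, p01a, p01b, p02a, p02b, p03a, p03b, p12a, p12b, p13a, p13b, p23a, p23b, r012, r013, r023, r123]
  · show T' 1 0 1 = Tcan 1 0 1; rw [Tcan, if_neg (by decide)]; rw [s101]; linarith [q0, q1, q2, q3, p01a, p01b, p02a, p02b, p03a, p03b, p12a, p12b, p13a, p13b, p23a, p23b, r012, r013, r023, r123]
  · show T' 1 0 2 = Tcan 1 0 2; rw [Tcan, if_neg (by decide)]; rw [s102]; linarith [q0, q1, q2, q3, p01a, p01b, p02a, p02b, p03a, p03b, p12a, p12b, p13a, p13b, p23a, p23b, r012, r013, r023, r123]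
  · show T' 1 0 3 = Tcan 1 0 3; rw [Tcan, if_neg (by decide)]; rw [s103]; linarith [q0, q1, q2, q3, p01a, p01b, p02a, p02b, p03a, p03b, p12a, p12b, p13a, p13b, p23a, p23b, r012, r013, r023, r123]
  · show T' 1 1 0 = Tcan 1 1 0; rw [Tcan, if_neg (by decide)]; rw [s110]; linarith [q0, q1, q2, q3, p01a, p01b, p02a, p02b, p03a, p03b, p12a, p12b, p13a, p13b, p23a, p23b, r012, r013, r023, r123]
  · show T' 1 1 1 = Tcan 1 1 1; rw [Tcan, if_neg (by decide)]; linarith [q0, q1, q2, q3, p01a, p01b, p02a, p02b, p03a, p03b, p12a, p12b, p13a, p13b, p23a, p23b, r012, r013, r023, r123]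
  · show T' 1 1 2 = Tcan 1 1 2; rw [Tcan, if_neg (by decide)]; linarith [q0, q1, q2, q3, p01a, p01b, p02a, p02b, p03a, p03b, p12a, p12b, p13a, p13b, p23a, p23b, r012, r013, r023, r123]
  · show T' 1 1 3 = Tcan 1 1 3; rw [Tcan, if_neg (by decide)]; linarith [q0, q1, q2, q3, p01a, p01b, p02a, p02b, p03a, p03b, p12a, p12b, p13a, p13b, p23a, p23b, r012, r013, r023, r123]
  · show T' 1 2 0 = Tcan 1 2 0; rw [Tcan, if_neg (by decide)]; rw [s120]; linarith [q0, q1, q2, q3, p01a, p01b, p02a, p02b, p03a, p03b, p12a, p12b, p13a, p13b, p23a, p23b, r012, r013, r023, r123]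
  · show T' 1 2 1 = Tcan 1 2 1; rw [Tcan, if_neg (by decide)]; rw [s121]; linarith [q0, q1, q2, q3, p01a, p01b, p02a, p02b, p03a, p03b, p12a, p12b, p13a, p13b, p23a, p23b, r012, r013, r023, r123]
  · show T' 1 2 2 = Tcan 1 2 2; rw [Tcan, if_neg (by decide)]; linarith [q0, q1, q2, q3, p01a, p01b, p02a, p02b, p03a, p03b, p12a, p12b, p13a, p13b, p23a, p23b, r012, r013, r023, r123]
  · show T' 1 2 3 = Tcan 1 2 3; rw [Tcan, if_neg (by decide)]; linarith [q0, q1, q2, q3, p01a, p01b, p02a, p02b, p03a, p03b, p12a, p12b, p13a, p13b, p23a, p23b, r012, r013, r023, r123]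
  · show T' 1 3 0 = Tcan 1 3 0; rw [Tcan, if_neg (by decide)]; rw [s130]; linarith [q0, q1, q2, q3, p01a, p01b, p02a, p02b, p03a, p03b, p12a, p12b, p13a, p13b, p23a, p23b, r012, r013, r023, r123]
  · show T' 1 3 1 = Tcan 1 3 1; rw [Tcan, if_neg (by decide)]; rw [s131]; linarith [q0, q1, q2, q3, p01a, p01b, p02a, p02b, p03a, p03b, p12a, p12b, p13a, p13b, p23a, p23b, r012, r013, r023, r123]
  · show T' 1 3 2 = Tcan 1 3 2; rw [Tcan, if_neg (by decide)]; rw [s132]; linarith [q0, q1, q2, q3, p01a, p01b, p02a, p02b, p03a, p03b, p12a, p12b, p13a, p13b, p23a, p23b, r012, r013, r023, r123]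
  · show T' 1 3 3 = Tcan 1 3 3; rw [Tcan, if_neg (by decide)]; linarith [q0, q1, q2, q3, p01a, p01b, p02a, p02b, p03a, p03b, p12a, p12b, p13a, p13b, p23a, p23b, r012, r013, r023, r123]
  · show T' 2 0 0 = Tcan 2 0 0; rw [Tcan, if_neg (by decide)]; rw [s200]; linarith [q0, q1, q2, q3, p01a, p01b, p02a, p02b, p03a, p03b, p12a, p12b, p13a, p13b, p23a, p23b, r012, r013, r023, r123]
  · show T' 2 0 1 = Tcan 2 0 1; rw [Tcan, if_neg (by decide)]; rw [s201]; linarith [q0, q1, q2, q3, p01a, p01b, p02a, p02b, p03a, p03b, p12a, p12b, p13a, p13b, p23a, p23b, r012, r013, r023, r123]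
  · show T' 2 0 2 = Tcan 2 0 2; rw [Tcan, if_pos (by decide)]; rw [s202]; linarith [q0, q1, q2, q3, p01a, p01b, p02a, p02b, p03a, p03b, p12a, p12b, p13a, p13b, p23a, p23b, r012, r013, r023, r123]
  · show T' 2 0 3 = Tcan 2 0 3; rw [Tcan, if_neg (by decide)]; rw [s203]; linarith [q0, q1, q2, q3, p01a, p01b, p02a, p02b, p03a, p03b, p12a, p12b, p13a, p13b, p23a, p23b, r012, r013, r023, r123]
  · show T' 2 1 0 = Tcan 2 1 0; rw [Tcan, if_neg (by decide)]; rw [s210]; linarith [q0, q1, q2, q3, p01a, p01b, p02a, p02b, p03a, p03b, p12a, p12b, p13a, p13b, p23a, p23b, r012, r013, r023, r123]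
  · show T' 2 1 1 = Tcan 2 1 1; rw [Tcan, if_neg (by decide)]; rw [s211]; linarith [q0, q1, q2, q3, p01a, p01b, p02a, p02b, p03a, p03b, p12a, p12b, p13a, p13b, p23a, p23b, r012, r013, r023, r123]
  · show T' 2 1 2 = Tcan 2 1 2; rw [Tcan, if_neg (by decide)]; rw [s212]; linarith [q0, q1, q2, q3, p01a, p01b, p02a, p02b, p03a, p03b, p12a, p12b, p13a, p13b, p23a, p23b, r012, r013, r023, r123]
  · show T' 2 1 3 = Tcan 2 1 3; rw [Tcan, if_neg (by decide)]; rw [s213]; linarith [q0, q1, q2, q3, p01a, p01b, p02a, p02b, p03a, p03b, p12a, p12b, p13a, p13b, p23a, p23b, r012, r013, r023, r123]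
  · show T' 2 2 0 = Tcan 2 2 0; rw [Tcan, if_pos (by decide)]; rw [s220]; linarith [q0, q1, q2, q3, p01a, p01b, p02a, p02b, p03a, p03b, p12a, p12b, p13a, p13b, p23a, p23b, r012, r013, r023, r123]
  · show T' 2 2 1 = Tcan 2 2 1; rw [Tcan, if_neg (by decide)]; rw [s221]; linarith [q0, q1, q2, q3, p01a, p01b, p02a, p02b, p03a, p03b, p12a, p12b, p13a, p13b, p23a, p23b, r012, r013, r023, r123]
  · show T' 2 2 2 = Tcan 2 2 2; rw [Tcan, if_neg (by decide)]; linarith [q0, q1, q2, q3, p01a, p01b, p02a, p02b, p03a, p03b, p12a, p12b, p13a, p13b, p23a, p23b, r012, r013, r023, r123]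
  · show T' 2 2 3 = Tcan 2 2 3; rw [Tcan, if_neg (by decide)]; linarith [q0, q1, q2, q3, p01a, p01b, p02a, p02b, p03a, p03b, p12a, p12b, p13a, p13b, p23a, p23b, r012, r013, r023, r123]
  · show T' 2 3 0 = Tcan 2 3 0; rw [Tcan, if_neg (by decide)]; rw [s230]; linarith [q0, q1, q2, q3, p01a, p01b, p02a, p02b, p03a, p03b, p12a, p12b, p13a, p13b, p23a, p23b, r012, r013, r023, r123]
  · show T' 2 3 1 = Tcan 2 3 1; rw [Tcan, if_neg (by decide)]; rw [s231]; linarith [q0, q1, q2, q3, p01a, p01b, p02a, p02b, p03a, p03b, p12a, p12b, p13a, p13b, p23a, p23b, r012, r013, r023, r123]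
  · show T' 2 3 2 = Tcan 2 3 2; rw [Tcan, if_neg (by decide)]; rw [s232]; linarith [q0, q1, q2, q3, p01a, p01b, p02a, p02b, p03a, p03b, p12a, p12b, p13a, p13b, p23a, p23b, r012, r013, r023, r123]
  · show T' 2 3 3 = Tcan 2 3 3; rw [Tcan, if_neg (by decide)]; linarith [q0, q1, q2, q3, p01a, p01b, p02a, p02b, p03a, p03b, p12a, p12b, p13a, p13b, p23a, p23b, r012, r013, r023, r123]
  · show T' 3 0 0 = Tcan 3 0 0; rw [Tcan, if_neg (by decide)]; rw [s300]; linarith [q0, q1, q2, q3, p01a, p01b, p02a, p02b, p03a, p03b, p12a, p12b, p13a, p13b, p23a, p23b, r012, r013, r023, r123]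
  · show T' 3 0 1 = Tcan 3 0 1; rw [Tcan, if_neg (by decide)]; rw [s301]; linarith [q0, q1, q2, q3, p01a, p01b, p02a, p02b, p03a, p03b, p12a, p12b, p13a, p13b, p23a, p23b, r012, r013, r023, r123]
  · show T' 3 0 2 = Tcan 3 0 2; rw [Tcan, if_neg (by decide)]; rw [s302]; linarith [q0, q1, q2, q3, p01a, p01b, p02a, p02b, p03a, p03b, p12a, p12b, p13a, p13b, p23a, p23b, r012, r013, r023, r123]
  · show T' 3 0 3 = Tcan 3 0 3; rw [Tcan, if_pos (by decide)]; rw [s303]; linarith [q0, q1, q2, q3, p01a, p01b, p02a, p02b, p03a, p03b, p12a, p12b, p13a, p13b, p23a, p23b, r012, r013, r023, r123]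
  · show T' 3 1 0 = Tcan 3 1 0; rw [Tcan, if_neg (by decide)]; rw [s310]; linarith [q0, q1, q2, q3, p01a, p01b, p02a, p02b, p03a, p03b, p12a, p12b, p13a, p13b, p23a, p23b, r012, r013, r023, r123]
  · show T' 3 1 1 = Tcan 3 1 1; rw [Tcan, if_neg (by decide)]; rw [s311]; linarith [q0, q1, q2, q3, p01a, p01b, p02a, p02b, p03a, p03b, p12a, p12b, p13a, p13b, p23a, p23b, r012, r013, r023, r123]
  · show T' 3 1 2 = Tcan 3 1 2; rw [Tcan, if_neg (by decide)]; rw [s312]; linarith [q0, q1, q2, q3, p01a, p01b, p02a, p02b, p03a, p03b, p12a, p12b, p13a, p13b, p23a, p23b, r012, r013, r023, r123]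
  · show T' 3 1 3 = Tcan 3 1 3; rw [Tcan, if_neg (by decide)]; rw [s313]; linarith [q0, q1, q2, q3, p01a, p01b, p02a, p02b, p03a, p03b, p12a, p12b, p13a, p13b, p23a, p23b, r012, r013, r023, r123]
  · show T' 3 2 0 = Tcan 3 2 0; rw [Tcan, if_neg (by decide)]; rw [s320]; linarith [q0, q1, q2, q3, p01a, p01b, p02a, p02b, p03a, p03b, p12a, p12b, p13a, p13b, p23a, p23b, r012, r013, r023, r123]
  · show T' 3 2 1 = Tcan 3 2 1; rw [Tcan, if_neg (by decide)]; rw [s321]; linarith [q0, q1, q2, q3, p01a, p01b, p02a, p02b, p03a, p03b, p12a, p12b, p13a, p13b, p23a, p23b, r012, r013, r023, r123]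
  · show T' 3 2 2 = Tcan 3 2 2; rw [Tcan, if_neg (by decide)]; rw [s322]; linarith [q0, q1, q2, q3, p01a, p01b, p02a, p02b, p03a, p03b, p12a, p12b, p13a, p13b, p23a, p23b, r012, r013, r023, r123]
  · show T' 3 2 3 = Tcan 3 2 3; rw [Tcan, if_neg (by decide)]; rw [s323]; linarith [q0, q1, q2, q3, p01a, p01b, p02a, p02b, p03a, p03b, p12a, p12b, p13a, p13b, p23a, p23b, r012, r013, r023, r123]
  · show T' 3 3 0 = Tcan 3 3 0; rw [Tcan, if_pos (by decide)]; rw [s330]; linarith [q0, q1, q2, q3, p01a, p01b, p02a, p02b, p03a, p03b, p12a, p12b, p13a, p13b, p23a, p23b, r012, r013, r023, r123]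
  · show T' 3 3 1 = Tcan 3 3 1; rw [Tcan, if_neg (by decide)]; rw [s331]; linarith [q0, q1, q2, q3, p01a, p01b, p02a, p02b, p03a, p03b, p12a, p12b, p13a, p13b, p23a, p23b, r012, r013, r023, r123]
  · show T' 3 3 2 = Tcan 3 3 2; rw [Tcan, if_neg (by decide)]; rw [s332]; linarith [q0, q1, q2, q3, p01a, p01b, p02a, p02b, p03a, p03b, p12a, p12b, p13a, p13b, p23a, p23b, r012, r013, r023, r123]
  · show T' 3 3 3 = Tcan 3 3 3; rw [Tcan, if_neg (by decide)]; linarith [q0, q1, q2, q3, p01a, p01b, p02a, p02b, p03a, p03b, p12a, p12b, p13a, p13b, p23a, p23b, r012, r013, r023, r123]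

lemma clin (u y z : Fin 4 → ℝ) (a : ℝ) :
    (∑ i, u i * (y i - a * z i)) = (∑ i, u i * y i) - a * (∑ i, u i * z i) := by
  simp only [Fin.sum_univ_four]; ring

set_option maxHeartbeats 1000000 in
lemma no6 (u v w : Fin 6 → Fin 4 → ℝ)
    (h : ∀ i j k, Tcan i j k = ∑ s, u s i * v s j * w s k) : False := by
  have slice : ∀ (y : Fin 4 → ℝ) (j k : Fin 4),
      (∑ i, y i * Tcan i j k) = ∑ s, (∑ i, u s i * y i) * (v s j * w s k) := by
    intro y j k
    have h1 : ∀ i : Fin 4, y i * Tcan i j k = ∑ s, (u s i * y i) * (v s j * w s k) := by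
      intro i; rw [h i j k, Finset.mul_sum]; exact Finset.sum_congr rfl (fun s _ => by ring)
    rw [Finset.sum_congr rfl fun i _ => h1 i, Finset.sum_comm]
    refine Finset.sum_congr rfl fun s _ => ?_
    rw [Finset.sum_mul]
  -- step 1: find s2
  have e1 : (∑ i, (![0,1,0,0] : Fin 4 → ℝ) i * Tcan i 0 0) = 1/3 := by
    simp [Fin.sum_univ_four, tv000, tv100, tv200, tv300]
  rw [slice] at e1
  have hex2 : ∃ s, (∑ i, u s i * (![0,1,0,0] : Fin 4 → ℝ) i) ≠ 0 := by
    by_contra hh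
    push_neg at hh
    rw [Finset.sum_eq_zero (fun s _ => by rw [hh s, zero_mul])] at e1
    norm_num at e1
  obtain ⟨s2, hs2⟩ := hex2
  set y1 : Fin 4 → ℝ := ![0,1,0,0] with hy1
  -- step 2: vector b killing s2
  set b : Fin 4 → ℝ :=
    fun m => (![0,0,1,0] : Fin 4 → ℝ) m -
      ((∑ i, u s2 i * (![0,0,1,0] : Fin 4 → ℝ) i) / (∑ i, u s2 i * y1 i)) * y1 m with hb
  have hb2 : (∑ i, u s2 i * b i) = 0 := by
    rw [hb, clin, div_mul_cancel₀ _ hs2, sub_self]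
  have e2 : (∑ i, b i * Tcan i 2 0) = 1/3 := by
    simp [hb, hy1, Fin.sum_univ_four, tv020, tv120, tv220, tv320]
  rw [slice] at e2
  have hex3 : ∃ s, s ≠ s2 ∧ (∑ i, u s i * b i) ≠ 0 := by
    by_contra hh
    push_neg at hh
    rw [Finset.sum_eq_zero] at e2
    · norm_num at e2
    intro s _
    rcases eq_or_ne s s2 with rfl | hne
    · rw [hb2, zero_mul]
    · rw [hh s hne, zero_mul]
  obtain ⟨s3, hs32, hs3⟩ := hex3
  -- step 3: vector cc killing s2 s3
  set c1 : Fin 4 → ℝ :=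
    fun m => (![0,0,0,1] : Fin 4 → ℝ) m -
      ((∑ i, u s2 i * (![0,0,0,1] : Fin 4 → ℝ) i) / (∑ i, u s2 i * y1 i)) * y1 m with hc1
  have hc12 : (∑ i, u s2 i * c1 i) = 0 := by
    rw [hc1, clin, div_mul_cancel₀ _ hs2, sub_self]
  set cc : Fin 4 → ℝ :=
    fun m => c1 m - ((∑ i, u s3 i * c1 i) / (∑ i, u s3 i * b i)) * b m with hcc
  have hcc2 : (∑ i, u s2 i * cc i) = 0 := by
    rw [hcc, clin, hc12, hb2, mul_zero, sub_self]
  have hcc3 : (∑ i, u s3 i * cc i) = 0 := by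
    rw [hcc, clin, div_mul_cancel₀ _ hs3, sub_self]
  have e3 : (∑ i, cc i * Tcan i 3 0) = 1/3 := by
    simp [hcc, hc1, hb, hy1, Fin.sum_univ_four, tv030, tv130, tv230, tv330]
  rw [slice] at e3
  have hex4 : ∃ s, s ≠ s2 ∧ s ≠ s3 ∧ (∑ i, u s i * cc i) ≠ 0 := by
    by_contra hh
    push_neg at hh
    rw [Finset.sum_eq_zero] at e3
    · norm_num at e3
    intro s _
    rcases eq_or_ne s s2 with rfl | hne2
    · rw [hcc2, zero_mul]
    rcases eq_or_ne s s3 with rfl | hne3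
    · rw [hcc3, zero_mul]
    · rw [hh s hne2 hne3, zero_mul]
  obtain ⟨s4, hs42, hs43, hs4⟩ := hex4
  -- step 4: vector d killing s2 s3 s4 with d 0 = 1
  set d1 : Fin 4 → ℝ :=
    fun m => (![1,0,0,0] : Fin 4 → ℝ) m -
      ((∑ i, u s2 i * (![1,0,0,0] : Fin 4 → ℝ) i) / (∑ i, u s2 i * y1 i)) * y1 m with hd1
  have hd12 : (∑ i, u s2 i * d1 i) = 0 := by
    rw [hd1, clin, div_mul_cancel₀ _ hs2, sub_self]
  set d2 : Fin 4 → ℝ :=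
    fun m => d1 m - ((∑ i, u s3 i * d1 i) / (∑ i, u s3 i * b i)) * b m with hd2
  have hd22 : (∑ i, u s2 i * d2 i) = 0 := by
    rw [hd2, clin, hd12, hb2, mul_zero, sub_self]
  have hd23 : (∑ i, u s3 i * d2 i) = 0 := by
    rw [hd2, clin, div_mul_cancel₀ _ hs3, sub_self]
  set d : Fin 4 → ℝ :=
    fun m => d2 m - ((∑ i, u s4 i * d2 i) / (∑ i, u s4 i * cc i)) * cc m with hd
  have hds2 : (∑ i, u s2 i * d i) = 0 := by
    rw [hd, clin, hd22, hcc2, mul_zero, sub_self]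
  have hds3 : (∑ i, u s3 i * d i) = 0 := by
    rw [hd, clin, hd23, hcc3, mul_zero, sub_self]
  have hds4 : (∑ i, u s4 i * d i) = 0 := by
    rw [hd, clin, div_mul_cancel₀ _ hs4, sub_self]
  have hd0 : d 0 = 1 := by
    simp [hd, hd2, hd1, hcc, hc1, hb, hy1]
  -- final matrix
  set A : Matrix (Fin 4) (Fin 4) ℝ := Matrix.of (fun j k => ∑ i, d i * Tcan i j k) with hA
  have hAval : A = !![d 1/3, 1/3, d 2/3, d 3/3; 1/3, 0, 0, 0; d 2/3, 0, 1/3, 0; d 3/3, 0, 0, 1/3] := by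
    ext j k
    fin_cases j <;> fin_cases k
    · show (∑ i, d i * Tcan i 0 0) = d 1/3
      rw [Fin.sum_univ_four, tv000, tv100, tv200, tv300, hd0]; ring
    · show (∑ i, d i * Tcan i 0 1) = (1:ℝ)/3
      rw [Fin.sum_univ_four, tv001, tv101, tv201, tv301, hd0]; ring
    · show (∑ i, d i * Tcan i 0 2) = d 2/3
      rw [Fin.sum_univ_four, tv002, tv102, tv202, tv302, hd0]; ring
    · show (∑ i, d i * Tcan i 0 3) = d 3/3
      rw [Fin.sum_univ_four, tv003, tv103, tv203, tv303, hd0]; ring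
    · show (∑ i, d i * Tcan i 1 0) = (1:ℝ)/3
      rw [Fin.sum_univ_four, tv010, tv110, tv210, tv310, hd0]; ring
    · show (∑ i, d i * Tcan i 1 1) = (0:ℝ)
      rw [Fin.sum_univ_four, tv011, tv111, tv211, tv311, hd0]; ring
    · show (∑ i, d i * Tcan i 1 2) = (0:ℝ)
      rw [Fin.sum_univ_four, tv012, tv112, tv212, tv312, hd0]; ring
    · show (∑ i, d i * Tcan i 1 3) = (0:ℝ)
      rw [Fin.sum_univ_four, tv013, tv113, tv213, tv313, hd0]; ring
    · show (∑ i, d i * Tcan i 2 0) = d 2/3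
      rw [Fin.sum_univ_four, tv020, tv120, tv220, tv320, hd0]; ring
    · show (∑ i, d i * Tcan i 2 1) = (0:ℝ)
      rw [Fin.sum_univ_four, tv021, tv121, tv221, tv321, hd0]; ring
    · show (∑ i, d i * Tcan i 2 2) = (1:ℝ)/3
      rw [Fin.sum_univ_four, tv022, tv122, tv222, tv322, hd0]; ring
    · show (∑ i, d i * Tcan i 2 3) = (0:ℝ)
      rw [Fin.sum_univ_four, tv023, tv123, tv223, tv323, hd0]; ring
    · show (∑ i, d i * Tcan i 3 0) = d 3/3
      rw [Fin.sum_univ_four, tv030, tv130, tv230, tv330, hd0]; ring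
    · show (∑ i, d i * Tcan i 3 1) = (0:ℝ)
      rw [Fin.sum_univ_four, tv031, tv131, tv231, tv331, hd0]; ring
    · show (∑ i, d i * Tcan i 3 2) = (0:ℝ)
      rw [Fin.sum_univ_four, tv032, tv132, tv232, tv332, hd0]; ring
    · show (∑ i, d i * Tcan i 3 3) = (1:ℝ)/3
      rw [Fin.sum_univ_four, tv033, tv133, tv233, tv333, hd0]; ring
  have hdet : A.det = -1/81 := by
    rw [hAval]
    simp [Matrix.det_succ_row_zero, Fin.sum_univ_succ, Fin.succAbove]
    ring
  have hrank4 : A.rank = 4 := by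
    rw [Matrix.rank_of_isUnit A ((Matrix.isUnit_iff_isUnit_det A).mpr (by
      rw [hdet]; exact isUnit_iff_ne_zero.mpr (by norm_num)))]
    simp
  -- A factors through Fin 3
  set S : Finset (Fin 6) := {s2, s3, s4} with hS
  have hcard : Sᶜ.card = 3 := by
    rw [Finset.card_compl, hS]
    rw [Finset.card_insert_of_notMem (by simp [hs32.symm, hs42.symm]),
      Finset.card_insert_of_notMem (by simp [hs43.symm]), Finset.card_singleton]
    simp
  set g : Fin 3 → Fin 6 := fun t => ((Sᶜ.orderIsoOfFin hcard) t : Fin 6) with hg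
  set B : Matrix (Fin 4) (Fin 3) ℝ :=
    Matrix.of (fun j t => (∑ i, u (g t) i * d i) * v (g t) j) with hB
  set Cm : Matrix (Fin 3) (Fin 4) ℝ := Matrix.of (fun t k => w (g t) k) with hCm
  have hfact : A = B * Cm := by
    ext j k
    rw [hA, Matrix.mul_apply]
    show (∑ i, d i * Tcan i j k) = _
    rw [slice d j k]
    have hz : ∀ s ∈ Finset.univ, s ∉ Sᶜ → (∑ i, u s i * d i) * (v s j * w s k) = 0 := by
      intro s _ hs
      rw [Finset.notMem_compl] at hs
      rw [hS] at hs
      simp only [Finset.mem_insert, Finset.mem_singleton] at hs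
      rcases hs with rfl | rfl | rfl
      · rw [hds2, zero_mul]
      · rw [hds3, zero_mul]
      · rw [hds4, zero_mul]
    rw [← Finset.sum_subset (Finset.subset_univ Sᶜ) hz]
    rw [← Finset.sum_coe_sort Sᶜ (fun s => (∑ i, u s i * d i) * (v s j * w s k))]
    rw [← Equiv.sum_comp (Sᶜ.orderIsoOfFin hcard).toEquiv
      (fun x => (∑ i, u (x : Fin 6) i * d i) * (v (x : Fin 6) j * w (x : Fin 6) k))]
    refine Finset.sum_congr rfl fun t _ => ?_
    rw [hB, hCm]
    show (∑ i, u (g t) i * d i) * (v (g t) j * w (g t) k)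
        = (∑ i, u (g t) i * d i) * v (g t) j * w (g t) k
    ring
  have hle : A.rank ≤ 3 := by
    rw [hfact]
    calc (B * Cm).rank ≤ B.rank := Matrix.rank_mul_le_left B Cm
    _ ≤ Fintype.card (Fin 3) := Matrix.rank_le_card_width B
    _ = 3 := by simp
  rw [hrank4] at hle
  norm_num at hle

lemma cube_expand {r : ℕ} (A : Fin r → ℝ) :
    (∑ i, A i) ^ 3 = ∑ i, ∑ j, ∑ k, A i * (A j * A k) := by
  rw [show (∑ i, A i)^3 = (∑ i, A i) * ((∑ i, A i) * (∑ i, A i)) from by ring,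
    Finset.sum_mul_sum, Finset.sum_mul]
  exact Finset.sum_congr rfl fun i _ => by
    rw [Finset.mul_sum]
    exact Finset.sum_congr rfl fun j _ => by rw [Finset.mul_sum]

lemma swap4 {r : ℕ} (G : Fin 4 → Fin 4 → Fin 4 → Fin r → ℝ) :
    (∑ i, ∑ j, ∑ k, ∑ s, G i j k s) = ∑ s, ∑ i, ∑ j, ∑ k, G i j k s := by
  calc (∑ i, ∑ j, ∑ k, ∑ s, G i j k s)
      = ∑ i, ∑ j, ∑ s, ∑ k, G i j k s :=
        Finset.sum_congr rfl fun i _ => Finset.sum_congr rfl fun j _ => Finset.sum_comm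
    _ = ∑ i, ∑ s, ∑ j, ∑ k, G i j k s :=
        Finset.sum_congr rfl fun i _ => Finset.sum_comm
    _ = ∑ s, ∑ i, ∑ j, ∑ k, G i j k s := Finset.sum_comm

open MvPolynomial in
lemma waring_to_tensor {r : ℕ} (lam : Fin r → ℝ) (l : Fin r → Fin 4 → ℝ)
    (hf : (X 0 * (X 0 * X 1 + X 2 ^ 2 + X 3 ^ 2) : MvPolynomial (Fin 4) ℝ) =
      ∑ s, C (lam s) * (∑ i, C (l s i) * X i) ^ 3) :
    (fun i j k => ∑ s, lam s * (l s i * l s j * l s k)) = Tcan := by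
  apply Tuniq
  · intro σ v
    refine Finset.sum_congr rfl fun s _ => ?_
    have h := Equiv.prod_comp σ (fun t => l s (v t))
    rw [Fin.prod_univ_three, Fin.prod_univ_three] at h
    rw [h]
  · intro y
    have h := congrArg (eval y) hf
    simp only [map_sum, eval_mul, eval_add, eval_pow, eval_C, eval_X] at h
    have step1 : (∑ i, ∑ j, ∑ k, (∑ s, lam s * (l s i * l s j * l s k)) * y i * y j * y k)
        = ∑ i, ∑ j, ∑ k, ∑ s, lam s * ((l s i * y i) * ((l s j * y j) * (l s k * y k))) := by
      refine Finset.sum_congr rfl fun i _ => Finset.sum_congr rfl fun j _ =>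
        Finset.sum_congr rfl fun k _ => ?_
      rw [Finset.sum_mul, Finset.sum_mul, Finset.sum_mul]
      exact Finset.sum_congr rfl fun s _ => by ring
    rw [step1, swap4]
    have step2 : ∀ s : Fin r, (∑ i, ∑ j, ∑ k,
        lam s * ((l s i * y i) * ((l s j * y j) * (l s k * y k))))
        = lam s * (∑ i, l s i * y i) ^ 3 := by
      intro s
      rw [cube_expand (fun i => l s i * y i)]
      simp only [← Finset.mul_sum]
    rw [Finset.sum_congr rfl fun s _ => step2 s, ← h]
    ring

lemma pad6 {r : ℕ} (hr : r ≤ 6) (u v w : Fin r → Fin 4 → ℝ)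
    (h : ∀ i j k, Tcan i j k = ∑ s, u s i * v s j * w s k) : False := by
  apply no6 (fun s i => if hs : (s : ℕ) < r then u ⟨s, hs⟩ i else 0)
    (fun s i => if hs : (s : ℕ) < r then v ⟨s, hs⟩ i else 0)
    (fun s i => if hs : (s : ℕ) < r then w ⟨s, hs⟩ i else 0)
  intro i j k
  rw [h i j k]
  set F : ℕ → ℝ := fun t => if hs : t < r then u ⟨t, hs⟩ i * v ⟨t, hs⟩ j * w ⟨t, hs⟩ k else 0
    with hF
  calc (∑ s : Fin r, u s i * v s j * w s k)
      = ∑ s : Fin r, F (s : ℕ) := by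
        refine Finset.sum_congr rfl fun s _ => ?_
        simp only [hF]
        rw [dif_pos s.isLt]
    _ = ∑ t ∈ Finset.range r, F t := Fin.sum_univ_eq_sum_range F r
    _ = ∑ t ∈ Finset.range 6, F t := Finset.sum_subset (Finset.range_subset_range.mpr hr)
          (fun t _ ht => by
            rw [hF]
            exact dif_neg (fun hc => ht (Finset.mem_range.mpr hc)))
    _ = ∑ s : Fin 6, F (s : ℕ) := (Fin.sum_univ_eq_sum_range F 6).symm
    _ = _ := by
        refine Finset.sum_congr rfl fun s _ => ?_
        by_cases hs : (s : ℕ) < r <;> simp [hF, hs]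

end AuxRank

open MvPolynomial in
/-- The cubic surface `x₁(x₁x₂ + x₃² + x₄²)` has real rank seven and real Waring rank
seven. -/
theorem real_rank_of_reducible_cubic :
    cubicRank (X 0 * (X 0 * X 1 + X 2 ^ 2 + X 3 ^ 2) : MvPolynomial (Fin 4) ℝ) = 7 ∧
    waringRank (X 0 * (X 0 * X 1 + X 2 ^ 2 + X 3 ^ 2) : MvPolynomial (Fin 4) ℝ) = 7 := by
  have b_eval : ∀ y : Fin 4 → ℝ, (∑ i, ∑ j, ∑ k, Tcan i j k * y i * y j * y k)
      = y 0 ^ 2 * y 1 + y 0 * y 2 ^ 2 + y 0 * y 3 ^ 2 := by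
    intro y
    simp only [Fin.sum_univ_four, tv000, tv001, tv002, tv003, tv010, tv011, tv012, tv013,
      tv020, tv021, tv022, tv023, tv030, tv031, tv032, tv033,
      tv100, tv101, tv102, tv103, tv110, tv111, tv112, tv113,
      tv120, tv121, tv122, tv123, tv130, tv131, tv132, tv133,
      tv200, tv201, tv202, tv203, tv210, tv211, tv212, tv213,
      tv220, tv221, tv222, tv223, tv230, tv231, tv232, tv233,
      tv300, tv301, tv302, tv303, tv310, tv311, tv312, tv313,
      tv320, tv321, tv322, tv323, tv330, tv331, tv332, tv333]
    ring
  have hpoly : (X 0 * (X 0 * X 1 + X 2 ^ 2 + X 3 ^ 2) : MvPolynomial (Fin 4) ℝ)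
      = (∑ i, ∑ j, ∑ k, C (Tcan i j k) * X i * X j * X k) := by
    apply MvPolynomial.funext
    intro x
    simp only [map_sum, eval_mul, eval_add, eval_pow, eval_C, eval_X]
    rw [b_eval x]
    ring
  have hTdecomp := waring_to_tensor lam7 l7 waring_id
  have wit : 7 ∈ {r : ℕ | ∃ u v w : Fin r → Fin 4 → ℝ,
      ∀ i j k, Tcan i j k = ∑ s, u s i * v s j * w s k} := by
    refine ⟨fun s i => lam7 s * l7 s i, l7, l7, fun i j k => ?_⟩
    rw [← hTdecomp]
    exact Finset.sum_congr rfl fun s _ => by ring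
  have hgeT : ∀ b ∈ {r : ℕ | ∃ u v w : Fin r → Fin 4 → ℝ,
      ∀ i j k, Tcan i j k = ∑ s, u s i * v s j * w s k}, 7 ≤ b := by
    intro b hb
    obtain ⟨u, v, w, hb⟩ := hb
    by_contra hlt
    exact pad6 (by omega) u v w hb
  have hTrank : tensorRank Tcan = 7 :=
    le_antisymm (Nat.sInf_le wit) (le_csInf ⟨7, wit⟩ hgeT)
  constructor
  · apply le_antisymm
    · exact Nat.sInf_le ⟨Tcan, Tcan_sym, hpoly, hTrank.le⟩
    · refine le_csInf ⟨7, ⟨Tcan, Tcan_sym, hpoly, hTrank.le⟩⟩ ?_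
      rintro b ⟨T', hsymT', hfT', hrT'⟩
      have hT'eq : T' = Tcan := by
        apply Tuniq T' hsymT'
        intro y
        have h := congrArg (eval y) hfT'.symm
        simp only [map_sum, eval_mul, eval_add, eval_pow, eval_C, eval_X] at h
        rw [h]
        ring
      rw [hT'eq, hTrank] at hrT'
      exact hrT'
  · apply le_antisymm
    · exact Nat.sInf_le ⟨lam7, l7, waring_id⟩
    · refine le_csInf ⟨7, ⟨lam7, l7, waring_id⟩⟩ ?_
      rintro b ⟨lam, l, hf⟩
      by_contra hlt
      have h := waring_to_tensor lam l hf
      apply pad6 (r := b) (by omega) (fun s i => lam s * l s i) l l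
      intro i j k
      rw [← h]
      exact Finset.sum_congr rfl fun s _ => by ring
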